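/- Let k be an integer with 0 ≤ k ≤ m-1, and define a = (γ^(2m+3k+2) + γ^(m+6k+4) + 1)/(3γ^(m+3k+2)), b = (γ^(2m) + γ^(m+6k+4) + γ^(3k+2))/(3γ^(m+3k+2)), c = (γ^(6k+4) + γ^(3k+2) + 1)/(3γ^(3k+2)) in F_q. Then the map g : F_q → F_q given by g(x) = a·x^(2m+1) + b·x^(m+1) + c·x is a bijection of F_q, satisfies g(g(x)) = x for all x ∈ F_q, and the set {x ∈ F_q : g(x) = x} has exactly m+1 elements. -/

import Mathlib

theorem stmt4 (q m : ℕ) (F : Type*) [Field F] [Fintype F]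
    (hq : Fintype.card F = q) (hodd : Odd q) (hq3 : q % 3 = 1)
    (hm : m = (q - 1) / 3)
    (γ : Fˣ) (hγ : ∀ x : Fˣ, x ∈ Subgroup.zpowers γ)
    (k : ℕ) (hk : k ≤ m - 1)
    (a b c : F)
    (ha : a = ((γ : F)^(2*m+3*k+2) + (γ : F)^(m+6*k+4) + 1) / (3 * (γ : F)^(m+3*k+2)))
    (hb : b = ((γ : F)^(2*m) + (γ : F)^(m+6*k+4) + (γ : F)^(3*k+2)) / (3 * (γ : F)^(m+3*k+2)))
    (hc : c = ((γ : F)^(6*k+4) + (γ : F)^(3*k+2) + 1) / (3 * (γ : F)^(3*k+2)))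
    (g : F → F)
    (hg : ∀ x : F, g x = a * x^(2*m+1) + b * x^(m+1) + c * x) :
    Function.Bijective g ∧ (∀ x : F, g (g x) = x) ∧
      {x : F | g x = x}.ncard = m + 1 := by
  have hq2 : 2 ≤ q := hq ▸ Fintype.one_lt_card
  have hq7 : 7 ≤ q := by obtain ⟨j, hj⟩ := hodd; omega
  have h3m : 3 * m = q - 1 := by omega
  have hm0 : 0 < m := by omega
  have horder : orderOf γ = q - 1 := by
    rw [orderOf_eq_card_of_forall_mem_zpowers hγ, Nat.card_units,
      Nat.card_eq_fintype_card, hq]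
  -- powers of γ that are not 1
  have key : ∀ n : ℕ, 0 < n → n < q - 1 → (γ : F)^n ≠ 1 := by
    intro n hn hn' h
    have h1 : (γ^n : Fˣ) = 1 := by
      ext; rw [Units.val_pow_eq_pow_val, h, Units.val_one]
    have := orderOf_dvd_of_pow_eq_one h1
    rw [horder] at this
    exact absurd (Nat.le_of_dvd hn this) (by omega)
  set ω : F := ((γ : F))^m with hωdef
  set u : F := ((γ : F))^(3*k+2) with hudef
  have hγ0 : (γ : F) ≠ 0 := Units.ne_zero γ
  have hω0 : ω ≠ 0 := pow_ne_zero _ hγ0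
  have hu0 : u ≠ 0 := pow_ne_zero _ hγ0
  have hγq : (γ : F)^(q-1) = 1 := by
    have := pow_orderOf_eq_one γ
    rw [horder] at this
    rw [← Units.val_pow_eq_pow_val, this, Units.val_one]
  have hωq : ω^3 = 1 := by rw [hωdef, ← pow_mul, show m*3 = q-1 by omega, hγq]
  have hω1 : ω ≠ 1 := key m hm0 (by omega)
  have hu1 : u ≠ 1 := key (3*k+2) (by omega) (by omega)
  have h3 : (3 : F) ≠ 0 := by
    intro h
    have h0 : (ω - 1)^3 = 0 := by linear_combination hωq - (ω^2 - ω) * h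
    exact hω1 (by rwa [pow_eq_zero_iff (by norm_num), sub_eq_zero] at h0)
  have hω2 : ω^2 + ω + 1 = 0 := by
    have hfac : (ω - 1) * (ω^2 + ω + 1) = 0 := by linear_combination hωq
    rcases mul_eq_zero.mp hfac with h | h
    · exact absurd (sub_eq_zero.mp h) hω1
    · exact h
  -- rewrite a b c in terms of ω and u
  have e1 : (γ : F)^(2*m+3*k+2) = ω^2*u := by
    rw [hωdef, hudef, show 2*m+3*k+2 = m*2+(3*k+2) by ring, pow_add, pow_mul]
  have e2 : (γ : F)^(m+6*k+4) = ω*u^2 := by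
    rw [hωdef, hudef, show m+6*k+4 = m+(3*k+2)*2 by ring, pow_add, pow_mul]
  have e3 : (γ : F)^(m+3*k+2) = ω*u := by
    rw [hωdef, hudef, show m+3*k+2 = m+(3*k+2) by ring, pow_add]
  have e4 : (γ : F)^(2*m) = ω^2 := by
    rw [hωdef, show 2*m = m*2 by ring, pow_mul]
  have e5 : (γ : F)^(6*k+4) = u^2 := by
    rw [hudef, show 6*k+4 = (3*k+2)*2 by ring, pow_mul]
  rw [e1, e2, e3] at ha
  rw [e4, e2, e3] at hb
  rw [e5] at hc
  -- the three multiplier identities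
  have L1 : a + b + c = u := by
    clear_value ω u; subst ha hb hc; field_simp
    linear_combination (1 + u) * hω2
  have L2 : a*ω^2 + b*ω + c = 1 := by
    clear_value ω u; subst ha hb hc; field_simp
    linear_combination (ω*u + u^2 - u + 1) * hω2
  have L3 : (a*(ω^2)^2 + b*ω^2 + c)*u = 1 := by
    clear_value ω u; subst ha hb hc; field_simp
    linear_combination (ω^3*u + ω^2*u^2 - ω^2*u - ω*u^2 + 2*ω + u^2 + u - 2) * hω2
  have hum : u^m = ω^2 := by
    rw [hudef, hωdef, ← pow_mul, ← pow_mul,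
      show (3*k+2)*m = (3*m)*k + m*2 by ring, h3m, pow_add, pow_mul, hγq, one_pow, one_mul]
  -- power decomposition of g
  have gpow : ∀ x : F, g x = a * ((x^m)^2 * x) + b * (x^m * x) + c * x := by
    intro x
    rw [hg, show 2*m+1 = m*2+1 by ring, pow_add, pow_mul, pow_one,
      show m+1 = m+1 from rfl, pow_add, pow_one]
  have hcase1 : ∀ x : F, x^m = 1 → g x = u * x := by
    intro x hx; rw [gpow, hx]; linear_combination x * L1
  have hcase2 : ∀ x : F, x^m = ω → g x = x := by
    intro x hx; rw [gpow, hx]; linear_combination x * L2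
  have hcase3 : ∀ x : F, x^m = ω^2 → g x * u = x := by
    intro x hx; rw [gpow, hx]; linear_combination x * L3
  have g0 : g 0 = 0 := by rw [hg]; simp
  -- trichotomy
  have tri : ∀ x : F, x ≠ 0 → x^m = 1 ∨ x^m = ω ∨ x^m = ω^2 := by
    intro x hx
    have hx1 : x^(q-1) = 1 := by
      rw [← hq]; exact FiniteField.pow_card_sub_one_eq_one x hx
    have hs3 : (x^m)^3 = 1 := by
      rw [← pow_mul, show m*3 = q-1 by omega, hx1]
    have hfac : (x^m - 1) * ((x^m - ω) * (x^m - ω^2)) = 0 := by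
      linear_combination hs3 + (x^m - (x^m)^2) * hω2 + (x^m - 1) * hωq
    rcases mul_eq_zero.mp hfac with h | h
    · exact Or.inl (sub_eq_zero.mp h)
    · rcases mul_eq_zero.mp h with h' | h'
      · exact Or.inr (Or.inl (sub_eq_zero.mp h'))
      · exact Or.inr (Or.inr (sub_eq_zero.mp h'))
  -- involution
  have hgg : ∀ x : F, g (g x) = x := by
    intro x
    by_cases hx : x = 0
    · rw [hx, g0, g0]
    rcases tri x hx with hs | hs | hs
    · have h1 : g x = u * x := hcase1 x hs
      have h2 : (u * x)^m = ω^2 := by rw [mul_pow, hum, hs, mul_one]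
      have h3' : g (u * x) * u = u * x := hcase3 _ h2
      rw [h1]
      exact mul_right_cancel₀ hu0 (by rw [h3', mul_comm])
    · rw [hcase2 x hs, hcase2 x hs]
    · have h1 : g x * u = x := hcase3 x hs
      have hgx0 : g x ≠ 0 := by
        intro h; rw [h, zero_mul] at h1; exact hx h1.symm
      have h2 : (g x)^m = 1 := by
        have : (g x)^m * u^m = ω^2 := by rw [← mul_pow, h1, hs]
        rw [hum] at this
        have := mul_right_cancel₀ (pow_ne_zero 2 hω0) (by rw [this, one_mul] : (g x)^m * ω^2 = 1 * ω^2)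
        exact this
      rw [hcase1 _ h2, mul_comm, h1]
  have hbij : Function.Bijective g := Function.Involutive.bijective hgg
  refine ⟨hbij, hgg, ?_⟩
  -- fixed point set
  have hset : {x : F | g x = x} = insert (0:F) {x : F | x^m = ω} := by
    ext x
    simp only [Set.mem_setOf_eq, Set.mem_insert_iff]
    constructor
    · intro hx
      by_cases hx0 : x = 0
      · exact Or.inl hx0
      rcases tri x hx0 with hs | hs | hs
      · exfalso
        have := hcase1 x hs
        rw [hx] at this
        exact hu1 (mul_right_cancel₀ hx0 (by rw [← this, one_mul]))
      · exact Or.inr hs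
      · exfalso
        have := hcase3 x hs
        rw [hx] at this
        exact hu1 (mul_left_cancel₀ hx0 (by rw [this, mul_one]))
    · rintro (rfl | hs)
      · exact g0
      · exact hcase2 x hs
  rw [hset]
  have h0nm : (0:F) ∉ {x : F | x^m = ω} := by
    simp only [Set.mem_setOf_eq]
    rw [zero_pow hm0.ne']
    exact fun h => hω0 h.symm
  rw [Set.ncard_insert_of_notMem h0nm (Set.toFinite _)]
  -- count solutions of x^m = ω
  have himg : {x : F | x^m = ω} = (fun y => (γ : F) * y) '' {y : F | y^m = 1} := by
    ext x
    simp only [Set.mem_setOf_eq, Set.mem_image]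
    constructor
    · intro hx
      refine ⟨(γ : F)⁻¹ * x, ?_, by field_simp⟩
      rw [mul_pow, inv_pow, hx, ← hωdef, inv_mul_cancel₀ hω0]
    · rintro ⟨y, hy, rfl⟩
      rw [mul_pow, hy, ← hωdef, mul_one]
  have hprimu : IsPrimitiveRoot (γ^3) m := by
    have h1 : orderOf (γ^3) = m := by
      rw [orderOf_pow, horder, ← h3m, Nat.gcd_comm,
        show Nat.gcd 3 (3*m) = 3 from Nat.gcd_eq_left ⟨m, rfl⟩]
      omega
    exact h1 ▸ IsPrimitiveRoot.orderOf (γ^3)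
  have hprim : IsPrimitiveRoot ((γ : F)^3) m := by
    have := IsPrimitiveRoot.coe_units_iff.mpr hprimu
    rwa [Units.val_pow_eq_pow_val] at this
  have hker : {y : F | y^m = 1} = ↑(Polynomial.nthRootsFinset m (1 : F)) := by
    ext y
    simp only [Set.mem_setOf_eq, Finset.coe_sort_coe, Finset.mem_coe,
      Polynomial.mem_nthRootsFinset hm0 (1 : F)]
  rw [himg, Set.ncard_image_of_injective _ (mul_right_injective₀ hγ0), hker,
    Set.ncard_coe_finset, hprim.card_nthRootsFinset]
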